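/- Let (u, λ) ∈ K × Λ satisfy ⟨Bu, μ⟩ − ⟨Cλ, μ⟩ = ⟨g, μ⟩ for all μ ∈ Λ, and let (ũ, λ̃) ∈ K̃ × Λ̃ satisfy ⟨Bũ, μ̃⟩ − ⟨Cλ̃, μ̃⟩ = ⟨g, μ̃⟩ for all μ̃ ∈ Λ̃. Then for every μ̃ ∈ Λ̃ there holds ‖λ − λ̃‖_Λ ≤ (1 + c_C/α_C) ‖λ − μ̃‖_Λ + (c_B/α_C) ‖u − ũ‖_V. -/

import Mathlib

/-- Strang-type estimate for the Lagrange multiplier: if `(u, λ)` satisfies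
the continuous equation `⟨Bu, μ⟩ − ⟨Cλ, μ⟩ = ⟨g, μ⟩` for all `μ ∈ Λ` and
`(ũ, λ̃)` satisfies the discrete equation tested over `Λ̃`, then for every
`μ̃ ∈ Λ̃`: `‖λ − λ̃‖ ≤ (1 + c_C/α_C)‖λ − μ̃‖ + (c_B/α_C)‖u − ũ‖`. -/
theorem multiplier_strang_estimate
    {V Λ : Type*} [NormedAddCommGroup V] [InnerProductSpace ℝ V] [CompleteSpace V]
    [NormedAddCommGroup Λ] [InnerProductSpace ℝ Λ] [CompleteSpace Λ]
    (Vt : Submodule ℝ V) (Λt : Submodule ℝ Λ) [FiniteDimensional ℝ Λt]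
    (B : V →L[ℝ] Λ →L[ℝ] ℝ) (C : Λ →L[ℝ] Λ →L[ℝ] ℝ) (g : Λ →L[ℝ] ℝ)
    (cB cC αC : ℝ) (hcB : 0 < cB) (hcC : 0 < cC) (hαC : 0 < αC)
    (hBcont : ∀ v : V, ‖B v‖ ≤ cB * ‖v‖)
    (hCcont : ∀ μ : Λ, ‖C μ‖ ≤ cC * ‖μ‖)
    (hCsym : ∀ μ ν : Λ, C μ ν = C ν μ)
    (hCell : ∀ μ : Λ, αC * ‖μ‖ ^ 2 ≤ C μ μ)
    (K : Set V) (hKne : K.Nonempty) (hKconv : Convex ℝ K) (hKcl : IsClosed K)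
    (Kt : Set V) (hKtne : Kt.Nonempty) (hKtconv : Convex ℝ Kt) (hKtcl : IsClosed Kt)
    (hKtVt : Kt ⊆ (Vt : Set V))
    (u : V) (lam : Λ) (hu : u ∈ K)
    (huEq : ∀ μ : Λ, B u μ - C lam μ = g μ)
    (ut : V) (lamt : Λ) (hut : ut ∈ Kt) (hlamt : lamt ∈ Λt)
    (hutEq : ∀ μt ∈ Λt, B ut μt - C lamt μt = g μt) :
    ∀ μt ∈ Λt,
      ‖lam - lamt‖ ≤ (1 + cC / αC) * ‖lam - μt‖ + (cB / αC) * ‖u - ut‖ := by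
  intro μt hμt
  set e : Λ := μt - lamt with he
  have heΛt : e ∈ Λt := sub_mem hμt hlamt
  -- Galerkin orthogonality: C (lam - lamt) e = B (u - ut) e
  have horth : C (lam - lamt) e = B (u - ut) e := by
    have h1 := huEq e
    have h2 := hutEq e heΛt
    simp only [map_sub, ContinuousLinearMap.sub_apply]
    linarith
  -- bound from ellipticity
  have hCe : αC * ‖e‖ ^ 2 ≤ C (μt - lam) e + B (u - ut) e := by
    have := hCell e
    have hsplit : C e e = C (μt - lam) e + C (lam - lamt) e := by
      have : e = (μt - lam) + (lam - lamt) := by rw [he]; abel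
      rw [this] at *
      simp [map_add, ContinuousLinearMap.add_apply]
    rw [hsplit, horth] at this
    linarith
  have hCbound : C (μt - lam) e ≤ cC * ‖μt - lam‖ * ‖e‖ := by
    calc C (μt - lam) e ≤ |C (μt - lam) e| := le_abs_self _
    _ ≤ ‖C (μt - lam)‖ * ‖e‖ := (C (μt - lam)).le_opNorm e
    _ ≤ cC * ‖μt - lam‖ * ‖e‖ :=
        mul_le_mul_of_nonneg_right (hCcont _) (norm_nonneg _)
  have hBbound : B (u - ut) e ≤ cB * ‖u - ut‖ * ‖e‖ := by
    calc B (u - ut) e ≤ |B (u - ut) e| := le_abs_self _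
    _ ≤ ‖B (u - ut)‖ * ‖e‖ := (B (u - ut)).le_opNorm e
    _ ≤ cB * ‖u - ut‖ * ‖e‖ :=
        mul_le_mul_of_nonneg_right (hBcont _) (norm_nonneg _)
  have hkey : αC * ‖e‖ ^ 2 ≤ (cC * ‖μt - lam‖ + cB * ‖u - ut‖) * ‖e‖ := by
    nlinarith
  have hnormμ : ‖μt - lam‖ = ‖lam - μt‖ := by rw [norm_sub_rev]
  have hebound : ‖e‖ ≤ (cC / αC) * ‖lam - μt‖ + (cB / αC) * ‖u - ut‖ := by
    rcases eq_or_lt_of_le (norm_nonneg e) with h0 | h0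
    · rw [← h0]
      positivity
    · rw [← hnormμ]
      rw [div_mul_eq_mul_div, div_mul_eq_mul_div, ← add_div, le_div_iff₀ hαC]
      nlinarith
  have htri : ‖lam - lamt‖ ≤ ‖lam - μt‖ + ‖e‖ := by
    have : lam - lamt = (lam - μt) + e := by rw [he]; abel
    rw [this]
    exact norm_add_le _ _
  have : ‖lam - lamt‖ ≤ ‖lam - μt‖ + ((cC / αC) * ‖lam - μt‖ + (cB / αC) * ‖u - ut‖) :=
    le_trans htri (by linarith)
  linarith [this]
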